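/- arXiv:2603.01817 — 6 statements merged into one kernel-verified Lean document; each statement's English description precedes it below -/
import Mathlib

section
/- Let R be a commutative ring and r, s ∈ R with r² + s² = -1. Then the map ψ from the quaternion algebra ℍ(R) = R⟨1,i,j,k⟩ (with i² = j² = k² = ijk = -1) to the 2×2 matrix ring M₂(R), sending a₀ + a₁i + a₂j + a₃k to the matrix with rows (a₀ + a₁r + a₂s, a₃ - a₂r + a₁s) and (-a₃ - a₂r + a₁s, a₀ - a₁r - a₂s), is a ring homomorphism. -/
open Quaternion Matrix

/-- The map `ψ : ℍ(R) → M₂(R)` associated to `r, s ∈ R`, sending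
`a₀ + a₁ i + a₂ j + a₃ k` to the matrix with rows
`(a₀ + a₁ r + a₂ s, a₃ - a₂ r + a₁ s)` and `(-a₃ - a₂ r + a₁ s, a₀ - a₁ r - a₂ s)`. -/
def quatToMatrix {R : Type*} [CommRing R] (r s : R) (α : ℍ[R]) :
    Matrix (Fin 2) (Fin 2) R :=
  !![α.re + α.imI * r + α.imJ * s, α.imK - α.imJ * r + α.imI * s;
     -α.imK - α.imJ * r + α.imI * s, α.re - α.imI * r - α.imJ * s]

/-- If `r² + s² = -1` in a commutative ring `R`, then `ψ` is a ring homomorphism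
from the quaternions over `R` to `2 × 2` matrices over `R`. -/
theorem quatToMatrix_ringHom {R : Type*} [CommRing R] (r s : R)
    (hrs : r ^ 2 + s ^ 2 = -1) :
    (∀ α β : ℍ[R], quatToMatrix r s (α + β) = quatToMatrix r s α + quatToMatrix r s β) ∧
    quatToMatrix r s 1 = 1 ∧
    (∀ α β : ℍ[R], quatToMatrix r s (α * β) = quatToMatrix r s α * quatToMatrix r s β) := by
  refine ⟨fun α β => ?_, ?_, fun α β => ?_⟩
  · ext i j
    fin_cases i <;> fin_cases j <;>
      simp [quatToMatrix] <;> ring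
  · ext i j
    fin_cases i <;> fin_cases j <;>
      simp [quatToMatrix, Matrix.one_apply]
  · ext i j
    fin_cases i <;> fin_cases j <;>
      simp [quatToMatrix, Quaternion.re_mul, Quaternion.imI_mul, Quaternion.imJ_mul,
        Quaternion.imK_mul, Matrix.mul_apply, Fin.sum_univ_two]
    · linear_combination (-(α.imI * β.imI) - α.imJ * β.imJ) * hrs
    · linear_combination (α.imI * β.imJ - α.imJ * β.imI) * hrs
    · linear_combination (α.imJ * β.imI - α.imI * β.imJ) * hrs
    · linear_combination (-(α.imI * β.imI) - α.imJ * β.imJ) * hrs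
end

section
/- Let R be a commutative ring, r, s ∈ R with r² + s² = -1, and ψ : ℍ(R) → M₂(R) as above. Then for every quaternion α: (1) ψ(α*) = ψ(α)ᵗ, where α* negates the coefficient of k; (2) ψ(α') · ψ(α)ᵗ = N(α) · I₂, where α' negates the coefficients of i and j; and (3) ψ(ᾱ) · ψ(α) = N(α) · I₂. -/
open Quaternion Matrix

/-- The anti-involution `α ↦ α*` negating the coefficient of `k`. -/
def quatStarK {R : Type*} [CommRing R] (α : ℍ[R]) : ℍ[R] :=
  ⟨α.re, α.imI, α.imJ, -α.imK⟩

/-- The involution `α ↦ α'` negating the coefficients of `i` and `j`. -/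
def quatPrime {R : Type*} [CommRing R] (α : ℍ[R]) : ℍ[R] :=
  ⟨α.re, -α.imI, -α.imJ, α.imK⟩

/-- Suppose `r² + s² = -1` in `R`. Then for every quaternion `α`:
(1) `ψ(α*) = ψ(α)ᵗ`; (2) `ψ(α') · ψ(α)ᵗ = N(α) · I₂`; (3) `ψ(ᾱ) · ψ(α) = N(α) · I₂`,
where `ᾱ = star α` is quaternionic conjugation and `N(α) = α ᾱ` is the norm. -/
theorem quatToMatrix_star_transpose {R : Type*} [CommRing R] (r s : R)
    (hrs : r ^ 2 + s ^ 2 = -1) (α : ℍ[R]) :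
    quatToMatrix r s (quatStarK α) = (quatToMatrix r s α)ᵀ ∧
    quatToMatrix r s (quatPrime α) * (quatToMatrix r s α)ᵀ =
      Quaternion.normSq α • (1 : Matrix (Fin 2) (Fin 2) R) ∧
    quatToMatrix r s (star α) * quatToMatrix r s α =
      Quaternion.normSq α • (1 : Matrix (Fin 2) (Fin 2) R) := by
  refine ⟨?_, ?_, ?_⟩ <;>
  · ext i j
    fin_cases i <;> fin_cases j <;>
      simp [quatToMatrix, quatStarK, quatPrime, Quaternion.normSq_def',
        Matrix.mul_apply, Fin.sum_univ_succ, Matrix.one_apply, Matrix.vecHead,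
        Matrix.vecTail] <;>
      first
        | ring1
        | linear_combination (α.imI ^ 2 + α.imJ ^ 2) * hrs
        | linear_combination (-(α.imI ^ 2 + α.imJ ^ 2)) * hrs
end

section
/- In the Laurent polynomial ring ℤ[p, Y^{±1}, Z^{±1}] (with p treated as a formal variable), let τ̂₁₂ = p²YZ² + p²Y + p² + p²Y⁻¹ - 1 + p²Y⁻¹Z⁻², let τ̂₀₂ = p³Y²Z² + p³YZ² + p³Z² - p²YZ² + p³Y + 2p³ - p²Y + p³Y⁻¹ - 2p² + p³Z⁻² - p²Y⁻¹ + p³Y⁻¹Z⁻² + p³Y⁻²Z⁻² - p²Y⁻¹Z⁻², and let τ̂₂₄ = p⁴Y²Z⁴ + p⁴Y²Z² + p⁴YZ² - p³Y²Z² + p⁴Y² + p⁴Z² - p³YZ² + p⁴Y - p³Z² + 2p⁴ - p³Y + p⁴Y⁻¹ - 2p³ + p⁴Z⁻² + p⁴Y⁻² - p³Y⁻¹ + p⁴Y⁻¹Z⁻² - p³Z⁻² + p⁴Y⁻²Z⁻² - p³Y⁻¹Z⁻² - p³Y⁻²Z⁻² + p⁴Y⁻²Z⁻⁴. Then (τ̂₁₂)²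 = (p⁴ + p³ + p² + p)·1 + (p+1)·τ̂₀₂ + (p-1)·τ̂₁₂ + τ̂₂₄. -/
section
variable {R : Type*} [CommRing R]

/-- The spherical transform `τ̂₁₂` of the basic Hecke operator `τ_{1,2}(p)`,
as a Laurent polynomial in `Y, Z` (stated universally: in any commutative ring
with `p` an element and `Y, Z` units). -/
def tauHat12 (p : R) (Y Z : Rˣ) : R :=
  p ^ 2 * Y * Z ^ 2 + p ^ 2 * Y + p ^ 2 + p ^ 2 * (↑Y⁻¹ : R) - 1 +
    p ^ 2 * (↑Y⁻¹ : R) * (↑Z⁻¹ : R) ^ 2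

/-- The spherical transform `τ̂₀₂` of `τ_{0,2}(p)`. -/
def tauHat02 (p : R) (Y Z : Rˣ) : R :=
  p ^ 3 * Y ^ 2 * Z ^ 2 + p ^ 3 * Y * Z ^ 2 + p ^ 3 * Z ^ 2 - p ^ 2 * Y * Z ^ 2 +
    p ^ 3 * Y + 2 * p ^ 3 - p ^ 2 * Y + p ^ 3 * (↑Y⁻¹ : R) - 2 * p ^ 2 +
    p ^ 3 * (↑Z⁻¹ : R) ^ 2 - p ^ 2 * (↑Y⁻¹ : R) + p ^ 3 * (↑Y⁻¹ : R) * (↑Z⁻¹ : R) ^ 2 +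
    p ^ 3 * (↑Y⁻¹ : R) ^ 2 * (↑Z⁻¹ : R) ^ 2 - p ^ 2 * (↑Y⁻¹ : R) * (↑Z⁻¹ : R) ^ 2

/-- The spherical transform `τ̂₂₄` of `τ_{2,4}(p)`. -/
def tauHat24 (p : R) (Y Z : Rˣ) : R :=
  p ^ 4 * Y ^ 2 * Z ^ 4 + p ^ 4 * Y ^ 2 * Z ^ 2 + p ^ 4 * Y * Z ^ 2 -
    p ^ 3 * Y ^ 2 * Z ^ 2 + p ^ 4 * Y ^ 2 + p ^ 4 * Z ^ 2 - p ^ 3 * Y * Z ^ 2 +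
    p ^ 4 * Y - p ^ 3 * Z ^ 2 + 2 * p ^ 4 - p ^ 3 * Y + p ^ 4 * (↑Y⁻¹ : R) -
    2 * p ^ 3 + p ^ 4 * (↑Z⁻¹ : R) ^ 2 + p ^ 4 * (↑Y⁻¹ : R) ^ 2 - p ^ 3 * (↑Y⁻¹ : R) +
    p ^ 4 * (↑Y⁻¹ : R) * (↑Z⁻¹ : R) ^ 2 - p ^ 3 * (↑Z⁻¹ : R) ^ 2 +
    p ^ 4 * (↑Y⁻¹ : R) ^ 2 * (↑Z⁻¹ : R) ^ 2 - p ^ 3 * (↑Y⁻¹ : R) * (↑Z⁻¹ : R) ^ 2 -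
    p ^ 3 * (↑Y⁻¹ : R) ^ 2 * (↑Z⁻¹ : R) ^ 2 + p ^ 4 * (↑Y⁻¹ : R) ^ 2 * (↑Z⁻¹ : R) ^ 4

end

/-- The decomposition `(τ̂₁₂)² = (p⁴+p³+p²+p)·1 + (p+1)·τ̂₀₂ + (p-1)·τ̂₁₂ + τ̂₂₄`
of the square of the spherical transform of `T₂(p) = τ_{1,2}(p)`, as an identity
of Laurent polynomials in `Y, Z` with coefficients polynomial in `p`. -/
theorem tauHat12_sq_decomposition {R : Type*} [CommRing R] (p : R) (Y Z : Rˣ) :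
    (tauHat12 p Y Z) ^ 2 =
      (p ^ 4 + p ^ 3 + p ^ 2 + p) * 1 + (p + 1) * tauHat02 p Y Z +
        (p - 1) * tauHat12 p Y Z + tauHat24 p Y Z := by
  have hY : (↑Y : R) * (↑Y⁻¹ : R) = 1 := Units.mul_inv Y
  have hZ : (↑Z : R) * (↑Z⁻¹ : R) = 1 := Units.mul_inv Z
  unfold tauHat12 tauHat02 tauHat24
  linear_combination (2*p^4 + 2*p^4*(↑Z⁻¹:R)^2 + 2*p^4*(↑Z:R)^2 +
    2*p^4*(↑Z:R)^2*(↑Z⁻¹:R)^2) * hY + (2*p^4 + 2*p^4*(↑Z:R)*(↑Z⁻¹:R)) * hZ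
end

section
/- Let V ⊆ ℝⁿ be the zero set of a family of real polynomials. If V contains a Zariski-dense subset of points with coordinates in ℚ̄ ∩ ℝ (the real algebraic numbers), then the real-radical ideal of V is generated by polynomials with coefficients in ℚ̄ ∩ ℝ; equivalently, V can be defined by polynomial equations with real algebraic coefficients. More concretely: any real polynomial f vanishing on V can be written as a finite ℝ-linear combination f = Σᵢ αᵢ fᵢ where the fᵢ have coefficients in ℚ̄ ∩ ℝ and each fᵢ vanishes on V. -/
open MvPolynomial

/-- Let `V ⊆ ℝⁿ` be the zero set of a family of real polynomials. If the set of
points of `V` with real algebraic coordinates is Zariski-dense in `V` (i.e. every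
polynomial vanishing on it vanishes on `V`), then any real polynomial `f` vanishing
on `V` is a finite `ℝ`-linear combination `f = Σᵢ αᵢ • fᵢ` of polynomials `fᵢ` with
real algebraic coefficients, each vanishing on `V`. -/
theorem defined_over_real_algebraic_numbers {n : ℕ} (V : Set (Fin n → ℝ))
    (S : Set (MvPolynomial (Fin n) ℝ))
    (hV : V = {x | ∀ g ∈ S, eval x g = 0})
    (hdense : ∀ g : MvPolynomial (Fin n) ℝ,
      (∀ x ∈ V, (∀ i, IsAlgebraic ℚ (x i)) → eval x g = 0) → ∀ x ∈ V, eval x g = 0)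
    (f : MvPolynomial (Fin n) ℝ) (hf : ∀ x ∈ V, eval x f = 0) :
    ∃ (k : ℕ) (α : Fin k → ℝ) (g : Fin k → MvPolynomial (Fin n) ℝ),
      (∀ i : Fin k, ∀ m : Fin n →₀ ℕ, IsAlgebraic ℚ (coeff m (g i))) ∧
      (∀ i : Fin k, ∀ x ∈ V, eval x (g i) = 0) ∧
      f = ∑ i : Fin k, α i • g i := by
  classical
  set K : IntermediateField ℚ ℝ := algebraicClosure ℚ ℝ with hK
  let B := Module.Basis.ofVectorSpace K ℝ
  -- the finitely many basis indices needed for the coefficients of `f`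
  set T : Finset _ := f.support.biUnion (fun m => (B.repr (coeff m f)).support) with hT
  let e := T.equivFin
  -- the polynomials over `K`
  set gK : _ → MvPolynomial (Fin n) K := fun j =>
    ∑ m ∈ f.support, monomial m (B.repr (coeff m f) j) with hgK
  have hcoeff : ∀ j m, coeff m (gK j) = B.repr (coeff m f) j := by
    intro j m
    simp only [hgK, coeff_sum, coeff_monomial]
    rw [Finset.sum_ite_eq' f.support m (fun m' => B.repr (coeff m' f) j)]
    split_ifs with h
    · rfl
    · rw [notMem_support_iff.mp h]
      simp
  -- terms outside the support of the representation vanish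
  have hout : ∀ (c : ℝ), ∀ j ∈ T, j ∉ (B.repr c).support →
      ((B.repr c j : ℝ)) * B j = 0 := by
    intro c j _ hj
    rw [Finsupp.notMem_support_iff.mp hj]
    simp
  -- every coefficient of `f` is a combination of the basis vectors indexed by `T`
  have hrepr : ∀ m ∈ f.support, coeff m f = ∑ j ∈ T, ((B.repr (coeff m f) j : ℝ)) * B j := by
    intro m hm
    have hsub : (B.repr (coeff m f)).support ⊆ T := by
      rw [hT]; exact Finset.subset_biUnion_of_mem (fun m => (B.repr (coeff m f)).support) hm
    rw [← Finset.sum_subset hsub (hout _)]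
    conv_lhs => rw [← B.linearCombination_repr (coeff m f)]
    rw [Finsupp.linearCombination_apply, Finsupp.sum]
    refine Finset.sum_congr rfl fun j _ => ?_
    rw [Algebra.smul_def]
    rfl
  refine ⟨T.card, fun i => B (e.symm i), fun i => map (algebraMap K ℝ) (gK (e.symm i)), ?_, ?_, ?_⟩
  · intro i m
    rw [coeff_map, hcoeff]
    exact (mem_algebraicClosure_iff).1 (B.repr (coeff m f) (e.symm i)).2
  · intro i
    apply hdense
    intro x hxV hx
    set x' : Fin n → K := fun i => (⟨x i, (mem_algebraicClosure_iff).2 (hx i)⟩ : K) with hx'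
    have hx'c : ∀ i, ((x' i : ℝ)) = x i := fun i => rfl
    have heval2 : ∀ j, eval x' (gK j) =
        ∑ m ∈ f.support, B.repr (coeff m f) j * ∏ i ∈ m.support, x' i ^ m i := by
      intro j
      simp only [hgK, eval_sum, eval_monomial, Finsupp.prod]
    have h2 : eval x f = ∑ j ∈ T, ((eval x' (gK j) : ℝ)) * B j := by
      rw [eval_eq]
      calc ∑ m ∈ f.support, coeff m f * ∏ i ∈ m.support, x i ^ m i
          = ∑ m ∈ f.support, ∑ j ∈ T,
              (((B.repr (coeff m f) j : ℝ)) * B j) * ∏ i ∈ m.support, x i ^ m i := by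
            refine Finset.sum_congr rfl fun m hm => ?_
            conv_lhs => rw [hrepr m hm]
            rw [Finset.sum_mul]
        _ = ∑ j ∈ T, ∑ m ∈ f.support,
              (((B.repr (coeff m f) j : ℝ)) * B j) * ∏ i ∈ m.support, x i ^ m i :=
            Finset.sum_comm
        _ = ∑ j ∈ T, ((eval x' (gK j) : ℝ)) * B j := by
            refine Finset.sum_congr rfl fun j _ => ?_
            rw [heval2]
            push_cast [hx'c]
            rw [Finset.sum_mul]
            exact Finset.sum_congr rfl fun m _ => by ring
    have hzero : ∑ j ∈ T, (eval x' (gK j)) • (B j) = 0 := by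
      have h3 : ∑ j ∈ T, (eval x' (gK j)) • (B j)
          = ∑ j ∈ T, ((eval x' (gK j) : ℝ)) * B j := by
        refine Finset.sum_congr rfl fun j _ => ?_
        rw [Algebra.smul_def]
        rfl
      rw [h3, ← h2, hf x hxV]
    have hLI := linearIndependent_iff'.mp B.linearIndependent T (fun j => eval x' (gK j)) hzero
    have h4 : eval x' (gK (e.symm i)) = 0 := hLI _ (e.symm i).2
    show eval x (map (algebraMap K ℝ) (gK (e.symm i))) = 0
    rw [eval_map]
    have h5 := eval₂_comp_left (algebraMap K ℝ) (RingHom.id K) x' (gK (e.symm i))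
    rw [RingHom.comp_id, eval₂_id, h4, map_zero] at h5
    have h6 : (algebraMap K ℝ) ∘ x' = x := rfl
    rw [h6] at h5
    exact h5.symm
  · -- `f` is the claimed combination
    apply MvPolynomial.ext
    intro m
    rw [coeff_sum]
    simp only [coeff_smul, coeff_map, hcoeff, smul_eq_mul]
    have hsum : (∑ x : Fin T.card,
          B ((e.symm x : _)) * algebraMap K ℝ (B.repr (coeff m f) (e.symm x)))
        = ∑ j ∈ T, ((B.repr (coeff m f) j : ℝ)) * B j := by
      rw [← Finset.sum_coe_sort T (fun j => ((B.repr (coeff m f) j : ℝ)) * B j)]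
      exact (Fintype.sum_equiv e _ _ (fun j => by
        rw [Equiv.symm_apply_apply, mul_comm]; rfl)).symm
    rw [hsum]
    by_cases hm : m ∈ f.support
    · exact hrepr m hm
    · rw [notMem_support_iff.mp hm]
      refine (Finset.sum_eq_zero fun j _ => ?_).symm
      simp
end

section
/- Let g = ((a, b), (c, d)) be an invertible 2×2 matrix over the quaternions ℍ with d invertible. Then the set of u ∈ V³ = ℝ + ℝi + ℝj such that the strictly-upper-triangular matrix ((0, u), (0, 0)) belongs to g·(𝔥 + 𝔪)·g⁻¹ — where 𝔥 is the set of 2×2 complex matrices (entries in ℝ + ℝi) X = ((x, y), (z, w)) and 𝔪 is the set of matrices diag(α, -α) with α a purely imaginary quaternion — is contained in the image of ℂ = ℝ + ℝi under the real-linear map y ↦ (a - b d⁻¹ c) · y · d⁻¹, and hence spans a real subspace of V³ of dimension at most 2. -/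
open Quaternion

private def qi : ℍ[ℝ] := ⟨0,1,0,0⟩

/-- Let `g = ((a, b), (c, d))` be a matrix over the quaternions with `d` invertible
(with two-sided inverse `dinv`). The set of `u ∈ V³ = ℝ + ℝi + ℝj` such that
`((0, u), (0, 0)) · g = g · (X + Y)` for some `X = ((x, y), (z, w))` with complex
entries (in `ℝ + ℝi`) and `Y = diag(α, -α)` with `α` purely imaginary, is contained
in the image of `ℂ = ℝ + ℝi` under the real-linear map `y ↦ (a - b d⁻¹ c) · y · d⁻¹`,
and hence spans a real subspace of dimension at most `2`. -/
theorem unipotent_intersection_dim_le_two (a b c d dinv : ℍ[ℝ])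
    (hd : d * dinv = 1) (hd' : dinv * d = 1) :
    ({u : ℍ[ℝ] | u.imK = 0 ∧ ∃ x y z w α : ℍ[ℝ],
        (x.imJ = 0 ∧ x.imK = 0) ∧ (y.imJ = 0 ∧ y.imK = 0) ∧
        (z.imJ = 0 ∧ z.imK = 0) ∧ (w.imJ = 0 ∧ w.imK = 0) ∧ α.re = 0 ∧
        u * c = a * (x + α) + b * z ∧
        u * d = a * y + b * (w - α) ∧
        0 = c * (x + α) + d * z ∧
        0 = c * y + d * (w - α)} ⊆
      (fun y : ℍ[ℝ] => (a - b * dinv * c) * y * dinv) ''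
        {y : ℍ[ℝ] | y.imJ = 0 ∧ y.imK = 0}) ∧
    Module.finrank ℝ (Submodule.span ℝ
      {u : ℍ[ℝ] | u.imK = 0 ∧ ∃ x y z w α : ℍ[ℝ],
        (x.imJ = 0 ∧ x.imK = 0) ∧ (y.imJ = 0 ∧ y.imK = 0) ∧
        (z.imJ = 0 ∧ z.imK = 0) ∧ (w.imJ = 0 ∧ w.imK = 0) ∧ α.re = 0 ∧
        u * c = a * (x + α) + b * z ∧
        u * d = a * y + b * (w - α) ∧
        0 = c * (x + α) + d * z ∧
        0 = c * y + d * (w - α)}) ≤ 2 := by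
  have hsub : {u : ℍ[ℝ] | u.imK = 0 ∧ ∃ x y z w α : ℍ[ℝ],
        (x.imJ = 0 ∧ x.imK = 0) ∧ (y.imJ = 0 ∧ y.imK = 0) ∧
        (z.imJ = 0 ∧ z.imK = 0) ∧ (w.imJ = 0 ∧ w.imK = 0) ∧ α.re = 0 ∧
        u * c = a * (x + α) + b * z ∧
        u * d = a * y + b * (w - α) ∧
        0 = c * (x + α) + d * z ∧
        0 = c * y + d * (w - α)} ⊆
      (fun y : ℍ[ℝ] => (a - b * dinv * c) * y * dinv) ''
        {y : ℍ[ℝ] | y.imJ = 0 ∧ y.imK = 0} := by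
    rintro u ⟨-, x, y, z, w, α, -, hy, -, -, -, -, h2, -, h4⟩
    refine ⟨y, hy, ?_⟩
    have hwα : d * (w - α) = -(c * y) := eq_neg_of_add_eq_zero_right h4.symm
    have hwα' : w - α = -(dinv * (c * y)) := by
      calc w - α = dinv * (d * (w - α)) := by rw [← mul_assoc, hd', one_mul]
        _ = -(dinv * (c * y)) := by rw [hwα, mul_neg]
    have : u = (u * d) * dinv := by rw [mul_assoc, hd, mul_one]
    rw [this, h2, hwα']
    noncomm_ring
  refine ⟨hsub, ?_⟩
  have hL : ∀ v : ℍ[ℝ], (a - b * dinv * c) * v * dinv =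
      ((LinearMap.mulRight ℝ dinv).comp (LinearMap.mulLeft ℝ (a - b * dinv * c))) v := by
    intro v; simp [LinearMap.mulRight_apply, LinearMap.mulLeft_apply]
  set L := (LinearMap.mulRight ℝ dinv).comp (LinearMap.mulLeft ℝ (a - b * dinv * c)) with hLdef
  have hset : {y : ℍ[ℝ] | y.imJ = 0 ∧ y.imK = 0} ⊆
      (Submodule.span ℝ ({1, qi} : Set ℍ[ℝ]) : Set ℍ[ℝ]) := by
    rintro y ⟨hJ, hK⟩
    have : y = y.re • (1 : ℍ[ℝ]) + y.imI • qi := by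
      ext <;> simp [hJ, hK] <;> simp [qi]
    rw [this]
    exact Submodule.add_mem _
      (Submodule.smul_mem _ _ (Submodule.subset_span (Or.inl rfl)))
      (Submodule.smul_mem _ _ (Submodule.subset_span (Or.inr rfl)))
  have hspan : Submodule.span ℝ
      {u : ℍ[ℝ] | u.imK = 0 ∧ ∃ x y z w α : ℍ[ℝ],
        (x.imJ = 0 ∧ x.imK = 0) ∧ (y.imJ = 0 ∧ y.imK = 0) ∧
        (z.imJ = 0 ∧ z.imK = 0) ∧ (w.imJ = 0 ∧ w.imK = 0) ∧ α.re = 0 ∧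
        u * c = a * (x + α) + b * z ∧
        u * d = a * y + b * (w - α) ∧
        0 = c * (x + α) + d * z ∧
        0 = c * y + d * (w - α)} ≤
      (Submodule.span ℝ ({1, qi} : Set ℍ[ℝ])).map L := by
    rw [Submodule.span_le]
    intro u hu
    obtain ⟨y, hy, rfl⟩ := hsub hu
    exact ⟨y, hset hy, (hL y).symm⟩
  calc Module.finrank ℝ (Submodule.span ℝ _) ≤
      Module.finrank ℝ ((Submodule.span ℝ ({1, qi} : Set ℍ[ℝ])).map L) :=
        Submodule.finrank_mono hspan
    _ ≤ Module.finrank ℝ (Submodule.span ℝ ({1, qi} : Set ℍ[ℝ])) :=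
        Submodule.finrank_map_le _ _
    _ ≤ 2 := by
        classical
        have h1 : ({1, qi} : Set ℍ[ℝ]) = (({1, qi} : Finset ℍ[ℝ]) : Set ℍ[ℝ]) := by simp
        rw [h1]
        exact (finrank_span_finset_le_card ({1, qi} : Finset ℍ[ℝ])).trans
          ((Finset.card_insert_le _ _).trans (by simp))
end

section
/- For the quaternion algebra ℍ(ℤ) of Lipschitz integers, an element α with norm N(α) = p (p an odd prime) satisfies p ∤ αⁿ for all n ≥ 1 if and only if the real part Re(α) ≠ 0. -/
open Quaternion

lemma lipschitz_key_sq (p : ℤ) (α : ℍ[ℤ]) (hN : Quaternion.normSq α = p) :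
    α ^ 2 = (2 * α.re) • α - ((p : ℤ) : ℍ[ℤ]) := by
  have h1 : α * star α = ((p : ℤ) : ℍ[ℤ]) := by rw [Quaternion.self_mul_star, hN]; rfl
  have h2 := α.star_eq_two_re_sub
  have h3 := h1
  rw [h2, mul_sub, Quaternion.mul_coe_eq_smul] at h3
  rw [pow_two, ← h3]
  abel

lemma lipschitz_key_ind (p : ℤ) (α : ℍ[ℤ]) (hN : Quaternion.normSq α = p) :
    ∀ n : ℕ, 1 ≤ n → ∃ a b : ℤ, α ^ n = a • α + ((b : ℤ) : ℍ[ℤ]) ∧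
      a ≡ (2 * α.re) ^ (n - 1) [ZMOD p] ∧ p ∣ b := by
  intro n hn
  induction n with
  | zero => omega
  | succ m ih =>
    rcases Nat.eq_or_lt_of_le hn with h1 | h1
    · obtain rfl : m = 0 := by omega
      exact ⟨1, 0, by simp, by simp [Int.ModEq.refl], dvd_zero _⟩
    · obtain ⟨a, b, hab, ha, hb⟩ := ih (by omega)
      refine ⟨2 * α.re * a + b, -(p * a), ?_, ?_, ⟨-a, by ring⟩⟩
      · rw [pow_succ, hab, add_mul, smul_mul_assoc, ← pow_two, lipschitz_key_sq p α hN]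
        ext <;> simp <;> ring
      · have h2 : (m + 1) - 1 = (m - 1) + 1 := by omega
        rw [h2, pow_succ]
        have hb0 : b ≡ 0 [ZMOD p] := (Int.modEq_zero_iff_dvd).mpr hb
        calc 2 * α.re * a + b ≡ 2 * α.re * ((2*α.re)^(m-1)) + 0 [ZMOD p] :=
              Int.ModEq.add ((Int.ModEq.refl _).mul ha) hb0
          _ = (2*α.re)^(m-1) * (2*α.re) := by ring

/-- For a Lipschitz integer quaternion `α` with norm `N(α) = p`, where `p` is an odd
prime, one has `p ∤ αⁿ` (i.e. `αⁿ ∉ p·ℍ(ℤ)`) for all `n ≥ 1` if and only if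
`Re(α) ≠ 0`. -/
theorem lipschitz_quaternion_not_dvd_iff_re_ne_zero (p : ℕ) (hp : p.Prime)
    (hodd : p ≠ 2) (α : ℍ[ℤ]) (hN : Quaternion.normSq α = (p : ℤ)) :
    (∀ n : ℕ, 1 ≤ n → ¬ ∃ β : ℍ[ℤ], α ^ n = (p : ℍ[ℤ]) * β) ↔ α.re ≠ 0 := by
  have hp2 : (2 : ℤ) ≤ (p : ℤ) := by exact_mod_cast hp.two_le
  have hpI : Prime (p : ℤ) := Int.prime_iff_natAbs_prime.mpr (by simpa using hp)
  have hre2 : α.re ^ 2 ≤ (p : ℤ) := by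
    have h := hN
    rw [Quaternion.normSq_def'] at h
    nlinarith [sq_nonneg α.imI, sq_nonneg α.imJ, sq_nonneg α.imK]
  constructor
  · intro h hre
    apply h 2 (by norm_num)
    refine ⟨-1, ?_⟩
    rw [lipschitz_key_sq (p : ℤ) α hN, hre]
    ext <;> simp
  · intro hre n hn ⟨β, hβ⟩
    obtain ⟨a, b, hab, ha, hb⟩ := lipschitz_key_ind (p : ℤ) α hN n hn
    have hpr : ¬ ((p : ℤ) ∣ α.re) := by
      intro hd
      have h1 : (p : ℤ) ≤ |α.re| := Int.le_of_dvd (abs_pos.mpr hre) ((dvd_abs _ _).mpr hd)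
      have h2 : α.re ^ 2 = |α.re| ^ 2 := (sq_abs α.re).symm
      nlinarith
    have hpa : ¬ ((p : ℤ) ∣ a) := by
      intro hd
      have h1 : (p : ℤ) ∣ (2 * α.re) ^ (n - 1) := by
        simpa using dvd_add (Int.ModEq.dvd ha) hd
      have h2 : (p : ℤ) ∣ 2 * α.re := hpI.dvd_of_dvd_pow h1
      rcases hpI.dvd_mul.mp h2 with h | h
      · have h3 : (p : ℤ) ≤ 2 := Int.le_of_dvd two_pos h
        omega
      · exact hpr h
    -- real part comparison
    have hcomp : a * α.re + b = (p : ℤ) * β.re := by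
      have := hab.symm.trans hβ
      have h := congrArg QuaternionAlgebra.re this
      simpa using h
    have : (p : ℤ) ∣ a * α.re := by
      obtain ⟨c, hc⟩ := hb
      exact ⟨β.re - c, by linarith [hcomp]⟩
    rcases hpI.dvd_mul.mp this with h | h
    · exact hpa h
    · exact hpr h
end
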